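/- The Čech–Stone compactification βℕ of the discrete space of natural numbers has the π-FNS property: there exists a π-base of βℕ with the FNS property. -/

import Mathlib

/-- A base of a topological space: a family of open sets such that every open
set is a union of members of the family. -/
def IsTopBase {X : Type*} [TopologicalSpace X] (B : Set (Set X)) : Prop :=
  (∀ U ∈ B, IsOpen U) ∧ ∀ U : Set X, IsOpen U → ∃ S ⊆ B, U = ⋃₀ S

/-- A π-base: a family of nonempty open sets such that every nonempty open set
contains a member of the family. -/
def IsPiBase {X : Type*} [TopologicalSpace X] (B : Set (Set X)) : Prop :=
  (∀ U ∈ B, IsOpen U ∧ U.Nonempty) ∧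
  ∀ U : Set X, IsOpen U → U.Nonempty → ∃ V ∈ B, V ⊆ U

/-- A cozero set: a set of the form `f ⁻¹' (0,1]` for a continuous `f : X → [0,1]`. -/
def IsCozeroSet {X : Type*} [TopologicalSpace X] (U : Set X) : Prop :=
  ∃ f : X → ℝ, Continuous f ∧ (∀ x, f x ∈ Set.Icc (0 : ℝ) 1) ∧
    U = f ⁻¹' Set.Ioc (0 : ℝ) 1

/-- `s` witnesses the FNS property for the family `B`: it assigns to each
`U ∈ B` a finite subfamily `s U ⊆ B` such that whenever `U, V ∈ B` are
disjoint there are disjoint `W_U, W_V ∈ s U ∩ s V` with `U ⊆ W_U`, `V ⊆ W_V`. -/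
def FNSWitness {X : Type*} (B : Set (Set X)) (s : Set X → Set (Set X)) : Prop :=
  (∀ U ∈ B, s U ⊆ B ∧ (s U).Finite) ∧
  ∀ U ∈ B, ∀ V ∈ B, Disjoint U V →
    ∃ WU ∈ s U ∩ s V, ∃ WV ∈ s U ∩ s V, Disjoint WU WV ∧ U ⊆ WU ∧ V ⊆ WV

/-- A family `B` has the FNS property if some `s` witnesses it. -/
def HasFNS {X : Type*} (B : Set (Set X)) : Prop :=
  ∃ s : Set X → Set (Set X), FNSWitness B s

/-- A space has the π-FNS property if some π-base of it has the FNS property. -/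
def HasPiFNS (X : Type*) [TopologicalSpace X] : Prop :=
  ∃ B : Set (Set X), IsPiBase B ∧ HasFNS B

/-- `u, l` witness the FN property for the family `F`. -/
def FNWitness {X : Type*} (F : Set (Set X)) (u l : Set X → Set (Set X)) : Prop :=
  (∀ V ∈ F, (u V).Finite ∧ ∀ U ∈ u V, U ∈ F ∧ V ⊆ U) ∧
  (∀ V ∈ F, (l V).Finite ∧ ∀ U ∈ l V, U ∈ F ∧ U ⊆ V) ∧
  ∀ V ∈ F, ∀ W ∈ F, V ⊆ W → (u V ∩ l W).Nonempty

/-- A family `F` has the FN property if some pair `u, l` witnesses it. -/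
def HasFN {X : Type*} (F : Set (Set X)) : Prop :=
  ∃ u l : Set X → Set (Set X), FNWitness F u l

/-- A family `P` of subsets of `X` is weakly completely regular: for any
finitely many `U₁, …, U_k ∈ P` (`k ≥ 1`) there are sequences `(A n)`, `(B n)`
of finite subfamilies of `P` with
`U₁ ∩ … ∩ U_k = ⋃ n, ⋃₀ A n = ⋃ n, (X \ ⋃₀ B n)` and
`⋃₀ A n ⊆ X \ ⋃₀ B n` for each `n`. -/
def WeaklyCompletelyRegularFamily {X : Type*} (P : Set (Set X)) : Prop :=
  ∀ S : Set (Set X), S.Finite → S.Nonempty → S ⊆ P →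
    ∃ A B : ℕ → Set (Set X),
      (∀ n, A n ⊆ P ∧ (A n).Finite) ∧ (∀ n, B n ⊆ P ∧ (B n).Finite) ∧
      ⋂₀ S = ⋃ n, ⋃₀ A n ∧ ⋂₀ S = ⋃ n, (⋃₀ B n)ᶜ ∧
      ∀ n, ⋃₀ A n ⊆ (⋃₀ B n)ᶜ

/-- The equivalence relation `x ~_P y` iff `x, y` belong to exactly the same
members of `P`. -/
def famSetoid {X : Type*} (P : Set (Set X)) : Setoid X where
  r x y := ∀ V ∈ P, (x ∈ V ↔ y ∈ V)
  iseqv := ⟨fun _ _ _ => Iff.rfl, fun h V hV => (h V hV).symm,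
    fun h1 h2 V hV => (h1 V hV).trans (h2 V hV)⟩

noncomputable section
open List Set

noncomputable instance : Denumerable (List Bool) := Denumerable.ofEncodableOfInfinite _

noncomputable def eLB : ℕ ≃ List Bool := (Denumerable.eqv (List Bool)).symm

def cone (l : List Bool) : Set ℕ := {n | l <+: eLB n}

lemma cone_anti {l m : List Bool} (h : l <+: m) : cone m ⊆ cone l :=
  fun _ hn => h.trans hn

lemma mem_cone_symm (l : List Bool) : eLB.symm l ∈ cone l := by
  simp [cone]

lemma cone_disjoint {w : List Bool} {c d : Bool} (h : c ≠ d) :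
    Disjoint (cone (w ++ [c])) (cone (w ++ [d])) := by
  rw [Set.disjoint_left]
  intro n h1 h2
  have e1 : w ++ [c] = w ++ [d] :=
    (List.prefix_of_prefix_length_le h1 h2 (by simp)).eq_of_length (by simp)
  exact h (by simpa using e1)

lemma split_incomp : ∀ a b : List Bool, ¬ a <+: b → ¬ b <+: a →
    ∃ w c d, c ≠ d ∧ w ++ [c] <+: a ∧ w ++ [d] <+: b
  | [], b, hab, _ => absurd (List.nil_prefix) hab
  | a, [], _, hba => absurd (List.nil_prefix) hba
  | x :: a, y :: b, hab, hba => by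
    by_cases hxy : x = y
    · subst hxy
      have hab' : ¬ a <+: b := fun h => hab (List.cons_prefix_cons.2 ⟨rfl, h⟩)
      have hba' : ¬ b <+: a := fun h => hba (List.cons_prefix_cons.2 ⟨rfl, h⟩)
      obtain ⟨w, c, d, hcd, h1, h2⟩ := split_incomp a b hab' hba'
      exact ⟨x :: w, c, d, hcd, List.cons_prefix_cons.2 ⟨rfl, h1⟩,
        List.cons_prefix_cons.2 ⟨rfl, h2⟩⟩
    · exact ⟨[], x, y, hxy, List.cons_prefix_cons.2 ⟨rfl, List.nil_prefix⟩,
        List.cons_prefix_cons.2 ⟨rfl, List.nil_prefix⟩⟩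

lemma split_ext {a b : List Bool} (h : a <+: b) (hne : a ≠ b) :
    ∃ c, a ++ [c] <+: b := by
  obtain ⟨r, rfl⟩ := h
  cases r with
  | nil => exact absurd (by simp) hne
  | cons c r => exact ⟨c, r, by simp⟩

/-- The family of subsets of `ℕ`: singletons and cones. -/
def Fam : Set (Set ℕ) := {S | ∃ n, S = {n}} ∪ {S | ∃ l, S = cone l}

/-- The finite family attached to a string `w`. -/
def fam (w : List Bool) : Set (Set ℕ) :=
  (cone '' ({p | p <+: w} ∪ (fun pc : List Bool × Bool => pc.1 ++ [pc.2]) ''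
      ({p | p <+: w} ×ˢ univ))) ∪ ((fun m => ({m} : Set ℕ)) '' {m | eLB m <+: w})

lemma prefixes_finite (w : List Bool) : {p | p <+: w}.Finite := by
  apply (Set.finite_range (fun k : Fin (w.length + 1) => w.take k)).subset
  intro p hp
  exact ⟨⟨p.length, Nat.lt_succ_of_le hp.length_le⟩, (List.prefix_iff_eq_take.1 hp).symm⟩

lemma fam_finite (w : List Bool) : (fam w).Finite := by
  apply Set.Finite.union
  · exact (((prefixes_finite w).union (((prefixes_finite w).prod (Set.finite_univ)).image _)).image _)
  · exact (((prefixes_finite w).preimage (eLB.injective.injOn)).image _)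

lemma fam_subset : ∀ w, fam w ⊆ Fam := by
  rintro w S (⟨l, _, rfl⟩ | ⟨m, _, rfl⟩)
  · exact Or.inr ⟨l, rfl⟩
  · exact Or.inl ⟨m, rfl⟩

lemma cone_mem_fam {p w : List Bool} (h : p <+: w) : cone p ∈ fam w :=
  Or.inl ⟨p, Or.inl h, rfl⟩

lemma cone_ext_mem_fam {p w : List Bool} {i : Bool} (h : p <+: w) :
    cone (p ++ [i]) ∈ fam w :=
  Or.inl ⟨p ++ [i], Or.inr ⟨⟨p, i⟩, ⟨h, trivial⟩, rfl⟩, rfl⟩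

lemma singleton_mem_fam {m : ℕ} {w : List Bool} (h : eLB m <+: w) :
    ({m} : Set ℕ) ∈ fam w :=
  Or.inr ⟨m, h, rfl⟩

lemma cone_ne_singleton (l : List Bool) (n : ℕ) : cone l ≠ {n} := by
  intro h
  have h1 : eLB.symm l ∈ cone l := mem_cone_symm l
  have h2 : eLB.symm (l ++ [true]) ∈ cone l := by simp [cone]
  rw [h, Set.mem_singleton_iff] at h1 h2
  have : l = l ++ [true] := eLB.symm.injective (h1.trans h2.symm)
  simpa using congrArg List.length this

lemma cone_injective : Function.Injective cone := by
  intro l m h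
  have h1 : m <+: l := by have := mem_cone_symm l; rw [h] at this; simpa [cone] using this
  have h2 : l <+: m := by have := mem_cone_symm m; rw [← h] at this; simpa [cone] using this
  exact h2.eq_of_length (le_antisymm h2.length_le h1.length_le)

open Classical in
/-- The string attached to a member of `Fam`. -/
noncomputable def tag (A : Set ℕ) : List Bool :=
  if h : ∃ n, A = {n} then eLB h.choose
  else if h : ∃ l, A = cone l then h.choose else []

lemma tag_singleton (n : ℕ) : tag {n} = eLB n := by
  have h : ∃ m, ({n} : Set ℕ) = {m} := ⟨n, rfl⟩
  simp only [tag]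
  rw [dif_pos h]
  have := h.choose_spec
  rw [Set.singleton_eq_singleton_iff] at this
  rw [← this]

lemma tag_cone (l : List Bool) : tag (cone l) = l := by
  have h1 : ¬ ∃ n, cone l = {n} := by rintro ⟨n, h⟩; exact cone_ne_singleton l n h
  have h2 : ∃ m, cone l = cone m := ⟨l, rfl⟩
  simp only [tag]
  rw [dif_neg h1, dif_pos h2]
  exact (cone_injective h2.choose_spec).symm

/-- The FNS assignment at the level of subsets of `ℕ`. -/
def tFam (A : Set ℕ) : Set (Set ℕ) := fam (tag A)

lemma incomp_case {A B : Set ℕ} {a b : List Bool} (hA : A ⊆ cone a) (hB : B ⊆ cone b)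
    (h1 : ¬ a <+: b) (h2 : ¬ b <+: a) :
    ∃ WA ∈ fam a ∩ fam b, ∃ WB ∈ fam a ∩ fam b,
      Disjoint WA WB ∧ A ⊆ WA ∧ B ⊆ WB := by
  obtain ⟨w, c, d, hcd, hca, hdb⟩ := split_incomp a b h1 h2
  have hwa : w <+: a := (List.prefix_append w [c]).trans hca
  have hwb : w <+: b := (List.prefix_append w [d]).trans hdb
  refine ⟨cone (w ++ [c]), ⟨cone_mem_fam hca, cone_ext_mem_fam hwb⟩,
    cone (w ++ [d]), ⟨cone_ext_mem_fam hwa, cone_mem_fam hdb⟩,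
    cone_disjoint hcd, hA.trans (cone_anti hca), hB.trans (cone_anti hdb)⟩

lemma strict_case {B : Set ℕ} {b : List Bool} (n : ℕ) (hab : eLB n <+: b)
    (hne : eLB n ≠ b) (hB : B ⊆ cone b) :
    ∃ WA ∈ fam (eLB n) ∩ fam b, ∃ WB ∈ fam (eLB n) ∩ fam b,
      Disjoint WA WB ∧ ({n} : Set ℕ) ⊆ WA ∧ B ⊆ WB := by
  obtain ⟨c, hc⟩ := split_ext hab hne
  refine ⟨{n}, ⟨singleton_mem_fam List.prefix_rfl, singleton_mem_fam hab⟩,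
    cone (eLB n ++ [c]), ⟨cone_ext_mem_fam List.prefix_rfl, cone_mem_fam hc⟩,
    ?_, subset_rfl, hB.trans (cone_anti hc)⟩
  rw [Set.disjoint_left]
  rintro x rfl hx
  have : eLB x ++ [c] <+: eLB x := hx
  simpa using this.length_le

lemma subset_cone_tag : ∀ A ∈ Fam, A ⊆ cone (tag A) := by
  rintro A (⟨n, rfl⟩ | ⟨l, rfl⟩)
  · rw [tag_singleton]
    intro x hx
    rw [Set.mem_singleton_iff] at hx
    subst hx
    exact List.prefix_rfl
  · rw [tag_cone]

lemma fam_nonempty : ∀ A ∈ Fam, A.Nonempty := by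
  rintro A (⟨n, rfl⟩ | ⟨l, rfl⟩)
  · exact ⟨n, rfl⟩
  · exact ⟨eLB.symm l, mem_cone_symm l⟩

lemma main_comb : ∀ A ∈ Fam, ∀ B ∈ Fam, Disjoint A B →
    ∃ WA ∈ tFam A ∩ tFam B, ∃ WB ∈ tFam A ∩ tFam B,
      Disjoint WA WB ∧ A ⊆ WA ∧ B ⊆ WB := by
  have key : ∀ A ∈ Fam, ∀ B ∈ Fam, Disjoint A B → tag A <+: tag B →
      ∃ WA ∈ tFam A ∩ tFam B, ∃ WB ∈ tFam A ∩ tFam B,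
        Disjoint WA WB ∧ A ⊆ WA ∧ B ⊆ WB := by
    rintro A hA B hB hd hpre
    have hBc : B ⊆ cone (tag B) := subset_cone_tag B hB
    rcases hA with hA | hA
    · obtain ⟨n, rfl⟩ := hA
      rw [tag_singleton] at hpre
      have hne : eLB n ≠ tag B := by
        intro heq
        rcases hB with hB | hB
        · obtain ⟨m, rfl⟩ := hB
          rw [tag_singleton] at heq
          have : n = m := eLB.injective heq
          subst this
          exact Set.disjoint_left.1 hd rfl rfl
        · obtain ⟨l, rfl⟩ := hB
          rw [tag_cone] at heq
          have : n ∈ cone l := by rw [← heq]; exact List.prefix_rfl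
          exact Set.disjoint_left.1 hd rfl this
      simpa only [tFam, tag_singleton] using strict_case n hpre hne hBc
    · obtain ⟨l, rfl⟩ := hA
      rw [tag_cone] at hpre
      exfalso
      obtain ⟨x, hx⟩ := fam_nonempty B hB
      exact Set.disjoint_left.1 hd (cone_anti hpre (hBc hx)) hx
  rintro A hA B hB hd
  by_cases h1 : tag A <+: tag B
  · exact key A hA B hB hd h1
  by_cases h2 : tag B <+: tag A
  · obtain ⟨WB, hWB, WA, hWA, hdis, hBW, hAW⟩ := key B hB A hA hd.symm h2
    rw [Set.inter_comm] at hWB hWA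
    exact ⟨WA, hWA, WB, hWB, hdis.symm, hAW, hBW⟩
  · exact incomp_case (subset_cone_tag A hA) (subset_cone_tag B hB) h1 h2

open Classical in
/-- Characteristic function of `A ⊆ ℕ` with values in `Bool`. -/
noncomputable def chi (A : Set ℕ) : ℕ → Bool := fun n => if n ∈ A then true else false

lemma chi_continuous (A : Set ℕ) : Continuous (chi A) := continuous_of_discreteTopology

/-- The clopen subset of `βℕ` attached to `A ⊆ ℕ`. -/
noncomputable def K (A : Set ℕ) : Set (StoneCech ℕ) :=
  stoneCechExtend (chi_continuous A) ⁻¹' {true}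

lemma isOpen_K (A : Set ℕ) : IsOpen (K A) :=
  (isOpen_discrete _).preimage (continuous_stoneCechExtend _)

lemma isClosed_K (A : Set ℕ) : IsClosed (K A) :=
  (isClosed_discrete _).preimage (continuous_stoneCechExtend _)

lemma mem_K_unit {A : Set ℕ} {n : ℕ} : stoneCechUnit n ∈ K A ↔ n ∈ A := by
  have h := congrFun (stoneCechExtend_extends (chi_continuous A)) n
  simp only [K, Set.mem_preimage, Set.mem_singleton_iff, Function.comp_apply] at h ⊢
  rw [h, chi]
  by_cases hn : n ∈ A <;> simp [hn]

lemma K_eq_closure (A : Set ℕ) : K A = closure (stoneCechUnit '' A) := by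
  apply subset_antisymm
  · intro x hx
    rw [mem_closure_iff]
    intro O hO hxO
    obtain ⟨n, hn⟩ := denseRange_stoneCechUnit.exists_mem_open (hO.inter (isOpen_K A))
      ⟨x, hxO, hx⟩
    exact ⟨stoneCechUnit n, hn.1, n, mem_K_unit.1 hn.2, rfl⟩
  · apply (isClosed_K A).closure_subset_iff.2
    rintro _ ⟨n, hn, rfl⟩
    exact mem_K_unit.2 hn

lemma K_mono {A B : Set ℕ} (h : A ⊆ B) : K A ⊆ K B := by
  rw [K_eq_closure, K_eq_closure]
  exact closure_mono (Set.image_mono (f := stoneCechUnit) h)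

lemma K_nonempty {A : Set ℕ} (h : A.Nonempty) : (K A).Nonempty :=
  ⟨stoneCechUnit h.choose, mem_K_unit.2 h.choose_spec⟩

lemma K_disjoint {A B : Set ℕ} (h : Disjoint A B) : Disjoint (K A) (K B) := by
  rw [Set.disjoint_left]
  intro x hxA hxB
  rw [K_eq_closure, mem_closure_iff] at hxB
  obtain ⟨_, hmem, n, hnB, rfl⟩ := hxB (K A) (isOpen_K A) hxA
  exact Set.disjoint_left.1 h (mem_K_unit.1 hmem) hnB

lemma K_disjoint_iff {A B : Set ℕ} : Disjoint (K A) (K B) ↔ Disjoint A B := by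
  refine ⟨fun h => Set.disjoint_left.2 fun n hnA hnB => ?_, K_disjoint⟩
  exact Set.disjoint_left.1 h (mem_K_unit.2 hnA) (mem_K_unit.2 hnB)

lemma K_preimage (A : Set ℕ) : {n | stoneCechUnit n ∈ K A} = A := by
  ext n; exact mem_K_unit

lemma K_singleton (n : ℕ) : K {n} = {stoneCechUnit n} := by
  rw [K_eq_closure, Set.image_singleton, closure_singleton]


/-- The Čech–Stone compactification of the discrete space `ℕ` has the π-FNS
property. -/
theorem stoneCechNat_piFNS : HasPiFNS (StoneCech ℕ) := by
  refine ⟨K '' Fam, ⟨?_, ?_⟩, fun U => K '' tFam {n | stoneCechUnit n ∈ U}, ?_, ?_⟩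
  · rintro _ ⟨A, hA, rfl⟩
    exact ⟨isOpen_K A, K_nonempty (fam_nonempty A hA)⟩
  · intro U hU hUne
    obtain ⟨n, hn⟩ := denseRange_stoneCechUnit.exists_mem_open hU hUne
    refine ⟨K {n}, ⟨{n}, Or.inl ⟨n, rfl⟩, rfl⟩, ?_⟩
    rw [K_singleton]
    exact Set.singleton_subset_iff.2 hn
  · rintro _ ⟨A, hA, rfl⟩
    simp only [K_preimage]
    exact ⟨Set.image_mono (f := K) (fam_subset _), (fam_finite _).image _⟩
  · rintro _ ⟨A, hA, rfl⟩ _ ⟨B, hB, rfl⟩ hd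
    simp only [K_preimage]
    obtain ⟨WA, hWA, WB, hWB, hdis, hAW, hBW⟩ :=
      main_comb A hA B hB (K_disjoint_iff.1 hd)
    exact ⟨K WA, ⟨⟨WA, hWA.1, rfl⟩, ⟨WA, hWA.2, rfl⟩⟩,
      K WB, ⟨⟨WB, hWB.1, rfl⟩, ⟨WB, hWB.2, rfl⟩⟩,
      K_disjoint hdis, K_mono hAW, K_mono hBW⟩

end
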